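/- (Uniform denominator control.) Let k be a number field with ring of integers 𝓞_k, and let S be a finite set of finite places of k (height-one primes of 𝓞_k). Let f, g ∈ k[x] with g nonconstant. Then there exists a finite set S' of finite places with S ⊆ S' such that for every a in the ring of S-integers of k and every y ∈ k with g.eval y = f.eval a, the element y lies in the ring of S'-integers of k. -/

import Mathlib

open Polynomial NumberField IsDedekindDomain Set Function

lemma finite_val_gt_one' {R : Type*} [CommRing R] [IsDedekindDomain R]
    {K : Type*} [Field K] [Algebra R K] [IsFractionRing R K] (x : K) :
    {v : HeightOneSpectrum R | 1 < v.valuation K x}.Finite := by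
  obtain ⟨⟨n, ⟨d, hd⟩⟩, hk⟩ := IsLocalization.surj (nonZeroDivisors R) x
  have hd' : d ≠ 0 := nonZeroDivisors.ne_zero hd
  suffices {v : HeightOneSpectrum R | v.valuation K (algebraMap R K d : K) < 1}.Finite by
    apply Finite.subset this
    intro v hv
    apply_fun v.valuation K at hk
    simp only [Valuation.map_mul, HeightOneSpectrum.valuation_of_algebraMap] at hk
    rw [mem_setOf_eq, HeightOneSpectrum.valuation_of_algebraMap]
    have := HeightOneSpectrum.intValuation_le_one v n
    contrapose! this
    change 1 < v.intValuation n
    rw [← hk, mul_comm]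
    exact lt_of_lt_of_le hv (le_mul_of_one_le_left' this)
  simp_rw [HeightOneSpectrum.valuation_of_algebraMap]
  change {v : HeightOneSpectrum R | v.intValuation d < 1}.Finite
  simp_rw [HeightOneSpectrum.intValuation_lt_one_iff_dvd]
  apply Ideal.finite_factors
  simpa only [Submodule.zero_eq_bot, ne_eq, Ideal.span_singleton_eq_bot]

theorem stmt_11 (k : Type*) [Field k] [NumberField k]
    (S : Set (HeightOneSpectrum (𝓞 k))) (hS : S.Finite)
    (f g : k[X]) (hg : 0 < g.natDegree) :
    ∃ S' : Set (HeightOneSpectrum (𝓞 k)), S'.Finite ∧ S ⊆ S' ∧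
      ∀ a ∈ S.integer k, ∀ y : k, g.eval y = f.eval a → y ∈ S'.integer k := by
  set n := g.natDegree with hn
  refine ⟨S ∪ (⋃ i ∈ Finset.range (f.natDegree + 1), {v | 1 < v.valuation k (f.coeff i)})
      ∪ (⋃ i ∈ Finset.range (n + 1), {v | 1 < v.valuation k (g.coeff i)})
      ∪ {v | 1 < v.valuation k (g.leadingCoeff)⁻¹}, ?_, ?_, ?_⟩
  · refine (((hS.union ?_).union ?_).union (finite_val_gt_one' _))
    · exact Set.Finite.biUnion (Finset.range _).finite_toSet fun i _ => finite_val_gt_one' _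
    · exact Set.Finite.biUnion (Finset.range _).finite_toSet fun i _ => finite_val_gt_one' _
  · intro v hv; exact Or.inl (Or.inl (Or.inl hv))
  · intro a ha y hy
    intro v hv
    simp only [Set.mem_union, Set.mem_iUnion, Set.mem_setOf_eq, not_or, not_exists, not_lt] at hv
    obtain ⟨⟨⟨hvS, hvf⟩, hvg⟩, hvlc⟩ := hv
    have hva : v.valuation k a ≤ 1 := ha v hvS
    by_contra hvy
    rw [not_le] at hvy
    have hglc : g.leadingCoeff ≠ 0 := Polynomial.leadingCoeff_ne_zero.mpr
      (Polynomial.ne_zero_of_natDegree_gt hg)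
    have hlc : v.valuation k g.leadingCoeff = 1 := by
      have h1 : v.valuation k g.leadingCoeff ≤ 1 := by
        have := hvg n (by simp); rwa [Polynomial.coeff_natDegree] at this
      refine le_antisymm h1 ?_
      have h2 : v.valuation k g.leadingCoeff * v.valuation k (g.leadingCoeff)⁻¹ = 1 := by
        rw [← Valuation.map_mul, mul_inv_cancel₀ hglc, Valuation.map_one]
      rw [← h2]
      exact mul_le_of_le_one_right' hvlc
    have hfa : v.valuation k (f.eval a) ≤ 1 := by
      rw [Polynomial.eval_eq_sum_range]
      refine Valuation.map_sum_le _ fun i hi => ?_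
      rw [Valuation.map_mul, Valuation.map_pow]
      exact mul_le_one' (hvf i hi) (pow_le_one' hva i)
    have hge : v.valuation k (g.eval y) = v.valuation k y ^ n := by
      rw [Polynomial.eval_eq_sum_range, Finset.sum_range_succ,
        Valuation.map_add_eq_of_lt_right]
      · rw [Valuation.map_mul, Valuation.map_pow, Polynomial.coeff_natDegree, hlc, one_mul]
      · rw [Valuation.map_mul, Valuation.map_pow, Polynomial.coeff_natDegree, hlc, one_mul]
        refine Valuation.map_sum_lt _ (pow_ne_zero n (ne_of_gt (lt_trans zero_lt_one hvy))) ?_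
        intro i hi
        rw [Valuation.map_mul, Valuation.map_pow]
        calc v.valuation k (g.coeff i) * v.valuation k y ^ i ≤ v.valuation k y ^ i :=
              mul_le_of_le_one_left' (hvg i (Finset.mem_range.mpr
                (lt_trans (Finset.mem_range.mp hi) (Nat.lt_succ_self n))))
        _ < v.valuation k y ^ n := pow_lt_pow_right₀ hvy (Finset.mem_range.mp hi)
    have h3 : 1 < v.valuation k (g.eval y) := hge ▸ one_lt_pow' hvy hg.ne'
    rw [hy] at h3
    exact absurd hfa (not_le.mpr h3)
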